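/- For integers 0 ≤ n < m ≤ l−1, the map τ(n+1, m) → τ(n, m) induced by the inclusion I^{n+1} ⊆ I^n (identity on the x^m·B factor) is an injective homomorphism of A-modules, and its cokernel is isomorphic to I^n/I^{n+1}; this cokernel is a free abelian group of rank n+1 on which the classes of x and y act by zero. -/

import Mathlib

open MvPolynomial

set_option maxHeartbeats 800000
set_option synthInstance.maxHeartbeats 200000

noncomputable section

/-- `A = ℤ[x,y]/(x^l − y^l)`, with `x = X 0`, `y = X 1`. -/
def IA (l : ℕ) : Ideal (MvPolynomial (Fin 2) ℤ) := Ideal.span {X 0 ^ l - X 1 ^ l}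

/-- `B = ℤ[x,t]/(t^l − 1)`, with `x = X 0`, `t = X 1`. -/
def IB (l : ℕ) : Ideal (MvPolynomial (Fin 2) ℤ) := Ideal.span {X 1 ^ l - 1}

abbrev Aq (l : ℕ) := MvPolynomial (Fin 2) ℤ ⧸ IA l
abbrev Bq (l : ℕ) := MvPolynomial (Fin 2) ℤ ⧸ IB l

/-- The class of `x` in `A`. -/
def xA (l : ℕ) : Aq l := Ideal.Quotient.mk (IA l) (X 0)
/-- The class of `y` in `A`. -/
def yA (l : ℕ) : Aq l := Ideal.Quotient.mk (IA l) (X 1)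
/-- The class of `x` in `B`. -/
def xB (l : ℕ) : Bq l := Ideal.Quotient.mk (IB l) (X 0)
/-- The class of `t` in `B`. -/
def tB (l : ℕ) : Bq l := Ideal.Quotient.mk (IB l) (X 1)

lemma tB_pow (l : ℕ) : tB l ^ l = 1 := by
  have h : (X 1 ^ l - 1 : MvPolynomial (Fin 2) ℤ) ∈ IB l := Ideal.subset_span rfl
  have h2 : Ideal.Quotient.mk (IB l) (X 1 ^ l - 1) = 0 :=
    Ideal.Quotient.eq_zero_iff_mem.mpr h
  have h3 : tB l ^ l - 1 = 0 := by
    rw [tB, ← map_pow, ← map_one (Ideal.Quotient.mk (IB l)), ← map_sub]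
    simpa using h2
  exact sub_eq_zero.mp h3

/-- The diagonal ring homomorphism `Δ : A → B`, determined by `x ↦ x`, `y ↦ t·x`. -/
def Δmap (l : ℕ) : Aq l →+* Bq l :=
  Ideal.Quotient.lift (IA l) ((aeval ![xB l, tB l * xB l]).toRingHom)
    (by
      intro p hp
      obtain ⟨c, rfl⟩ := Ideal.mem_span_singleton'.mp hp
      have key : (aeval ![xB l, tB l * xB l]) (X 0 ^ l - X 1 ^ l : MvPolynomial (Fin 2) ℤ) = 0 := by
        simp [mul_pow, tB_pow l]
      simp only [AlgHom.toRingHom_eq_coe, RingHom.coe_coe, map_mul, key, mul_zero])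

lemma Δmap_xA (l : ℕ) : Δmap l (xA l) = xB l := by
  simp [Δmap, xA]

lemma Δmap_yA (l : ℕ) : Δmap l (yA l) = tB l * xB l := by
  simp [Δmap, yA]

/-- The ideal `I = (x, y) ⊆ A`. -/
def Iid (l : ℕ) : Ideal (Aq l) := Ideal.span {xA l, yA l}

/-- `B` is an `A`-algebra (hence an `A`-module) via `Δ`. -/
instance instAlgAB (l : ℕ) : Algebra (Aq l) (Bq l) := (Δmap l).toAlgebra

/-- The `A`-submodule `x^m·B = {x^m·b : b ∈ B}` of `B`. -/
def xmB (l m : ℕ) : Submodule (Aq l) (Bq l) :=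
  LinearMap.range (LinearMap.mulLeft (Aq l) (xB l ^ m))

/-- The submodule `N_m = {(Δ(c), −c) : c ∈ I^m}` of `(x^m·B) ⊕ I^a`.  (The displayed set is
already an `A`-submodule, so taking its span does not change it.) -/
def Nsub (l a m : ℕ) : Submodule (Aq l) (↥(xmB l m) × ↥(Iid l ^ a)) :=
  Submodule.span (Aq l)
    {p | ∃ c ∈ Iid l ^ m, (p.1 : Bq l) = Δmap l c ∧ (p.2 : Aq l) = -c}

/-- The `A`-module `τ_{a,m} = ((x^m·B) ⊕ I^a)/N_m` of the paper. -/
abbrev τmod (l a m : ℕ) :=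
  @HasQuotient.Quotient _ _ (@Submodule.hasQuotient (Aq l) (↥(xmB l m) × ↥(Iid l ^ a)) _
    inferInstance inferInstance) (Nsub l a m)

abbrev instACGxmB (l m : ℕ) : AddCommGroup ↥(xmB l m) := Submodule.addCommGroup _

section ported
attribute [local instance] instACGxmB


abbrev Rp := MvPolynomial (Fin 2) ℤ

/-- Ideal of polynomials all of whose monomials have total degree ≥ k. -/
def Mdeg (k : ℕ) : Ideal Rp where
  carrier := {p | ∀ d ∈ p.support, k ≤ d 0 + d 1}
  zero_mem' := by simp
  add_mem' := by
    intro a b ha hb d hd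
    rcases Finset.mem_union.mp (MvPolynomial.support_add hd) with h | h
    exacts [ha d h, hb d h]
  smul_mem' := by
    intro r p hp d hd
    rw [smul_eq_mul] at hd
    obtain ⟨d1, h1, d2, h2, rfl⟩ := Finset.mem_add.mp (MvPolynomial.support_mul r p hd)
    have := hp d2 h2
    simp only [Finsupp.add_apply]
    omega

lemma mem_Mdeg {k : ℕ} {p : Rp} : p ∈ Mdeg k ↔ ∀ d ∈ p.support, k ≤ d 0 + d 1 := Iff.rfl

lemma Mdeg_mul {j k : ℕ} {p q : Rp} (hp : p ∈ Mdeg j) (hq : q ∈ Mdeg k) :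
    p * q ∈ Mdeg (j + k) := by
  intro d hd
  obtain ⟨d1, h1, d2, h2, rfl⟩ := Finset.mem_add.mp (MvPolynomial.support_mul p q hd)
  have := hp d1 h1; have := hq d2 h2
  simp only [Finsupp.add_apply]
  omega

def Jid : Ideal Rp := Ideal.span {X 0, X 1}

lemma X_mem_Jid (i : Fin 2) : (X i : Rp) ∈ Jid := by
  fin_cases i
  · exact Ideal.subset_span (Set.mem_insert _ _)
  · exact Ideal.subset_span (Set.mem_insert_of_mem _ rfl)

lemma Jid_le_Mdeg : Jid ≤ Mdeg 1 := by
  rw [Jid, Ideal.span_le]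
  rintro p (rfl | rfl) <;>
  · intro d hd
    rw [MvPolynomial.support_X] at hd
    rw [Finset.mem_singleton] at hd
    subst hd
    simp [Finsupp.single_apply]

lemma Jid_pow_le_Mdeg (k : ℕ) : Jid ^ k ≤ Mdeg k := by
  induction k with
  | zero => intro p _ d _; exact Nat.zero_le _
  | succ k ih =>
    rw [pow_succ]
    refine Ideal.mul_le.mpr fun r hr s hs => ?_
    exact Mdeg_mul (ih hr) (Jid_le_Mdeg hs)

lemma monomial_mem_Jid_pow {k : ℕ} (d : Fin 2 →₀ ℕ) (c : ℤ) (h : k ≤ d 0 + d 1) :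
    (monomial d c : Rp) ∈ Jid ^ k := by
  have hm : (monomial d c : Rp) = C c * (X 0 ^ d 0 * X 1 ^ d 1) := by
    rw [monomial_eq, Finsupp.prod_fintype _ _ (fun i => pow_zero _), Fin.prod_univ_two]
  rw [hm]
  refine Ideal.mul_mem_left _ _ ?_
  have h1 : (X 0 ^ d 0 * X 1 ^ d 1 : Rp) ∈ Jid ^ (d 0 + d 1) := by
    rw [pow_add]
    exact Ideal.mul_mem_mul (Ideal.pow_mem_pow (X_mem_Jid 0) _) (Ideal.pow_mem_pow (X_mem_Jid 1) _)
  exact Ideal.pow_le_pow_right h h1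

lemma Mdeg_le_Jid_pow (k : ℕ) : Mdeg k ≤ Jid ^ k := by
  intro p hp
  rw [← MvPolynomial.support_sum_monomial_coeff p]
  exact Submodule.sum_mem _ fun d hd => monomial_mem_Jid_pow d _ (hp d hd)

lemma IA_le_Mdeg (l : ℕ) : IA l ≤ Mdeg l := by
  rw [IA, Ideal.span_le]
  rintro p rfl
  intro d hd
  rcases Finset.mem_union.mp (MvPolynomial.support_sub _ _ _ hd) with h | h <;>
  · rw [MvPolynomial.support_X_pow, Finset.mem_singleton] at h
    subst h
    simp [Finsupp.single_apply]

def dmon (n i : ℕ) : Fin 2 →₀ ℕ := Finsupp.single 0 (n - i) + Finsupp.single 1 i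

lemma dmon_apply0 (n i : ℕ) : dmon n i 0 = n - i := by
  simp [dmon, Finsupp.single_apply]
lemma dmon_apply1 (n i : ℕ) : dmon n i 1 = i := by
  simp [dmon, Finsupp.single_apply]

lemma eq_dmon {n : ℕ} {d : Fin 2 →₀ ℕ} (h : d 0 + d 1 = n) : d = dmon n (d 1) := by
  ext a
  fin_cases a
  · show d 0 = dmon n (d 1) 0
    rw [dmon_apply0]; omega
  · show d 1 = dmon n (d 1) 1
    rw [dmon_apply1]

def φmap (n : ℕ) : Rp →ₗ[ℤ] (Fin (n+1) → ℤ) :=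
  LinearMap.pi fun i => MvPolynomial.lcoeff ℤ (dmon n i.val)

lemma φmap_apply (n : ℕ) (p : Rp) (i : Fin (n+1)) :
    φmap n p i = MvPolynomial.coeff (dmon n i.val) p := rfl

lemma IA_le_ker_φmap (l n : ℕ) (hnl : n < l) :
    (IA l).restrictScalars ℤ ≤ LinearMap.ker (φmap n) := by
  intro p hp
  rw [LinearMap.mem_ker]
  funext i
  rw [φmap_apply]
  by_contra h
  have hd := IA_le_Mdeg l hp _ (MvPolynomial.mem_support_iff.mpr h)
  rw [dmon_apply0, dmon_apply1] at hd
  have := i.2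
  omega

def ψmap (l n : ℕ) (hnl : n < l) : Aq l →ₗ[ℤ] (Fin (n+1) → ℤ) :=
  (Submodule.liftQ ((IA l).restrictScalars ℤ) (φmap n) (IA_le_ker_φmap l n hnl)) ∘ₗ
    (Submodule.Quotient.restrictScalarsEquiv ℤ (IA l)).symm.toLinearMap

lemma ψmap_mk (l n : ℕ) (hnl : n < l) (p : Rp) :
    ψmap l n hnl (Ideal.Quotient.mk (IA l) p) = φmap n p := by
  rw [ψmap, ← Ideal.Quotient.mk_eq_mk]
  simp only [LinearMap.coe_comp, LinearEquiv.coe_coe, Function.comp_apply,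
    Submodule.Quotient.restrictScalarsEquiv_symm_mk, Submodule.liftQ_apply]

lemma Iid_eq_map (l : ℕ) : Iid l = Ideal.map (Ideal.Quotient.mk (IA l)) Jid := by
  rw [Jid, Ideal.map_span, Iid]
  congr 1
  simp [Set.image_insert_eq, xA, yA]

lemma mem_Iid_pow {l k : ℕ} {a : Aq l} :
    a ∈ Iid l ^ k ↔ ∃ p ∈ Jid ^ k, Ideal.Quotient.mk (IA l) p = a := by
  rw [Iid_eq_map, ← Ideal.map_pow]
  exact Ideal.mem_map_iff_of_surjective _ Ideal.Quotient.mk_surjective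

lemma ψ_vanish (l n : ℕ) (hnl : n < l) {a : Aq l} (ha : a ∈ Iid l ^ (n+1)) :
    ψmap l n hnl a = 0 := by
  obtain ⟨p, hp, rfl⟩ := mem_Iid_pow.mp ha
  rw [ψmap_mk]
  funext i
  rw [φmap_apply]
  by_contra h
  have hd := Jid_pow_le_Mdeg _ hp _ (MvPolynomial.mem_support_iff.mpr h)
  rw [dmon_apply0, dmon_apply1] at hd
  have := i.2
  omega


lemma algebraMap_AB (l : ℕ) : algebraMap (Aq l) (Bq l) = Δmap l := rfl

lemma smul_B (l : ℕ) (r : Aq l) (b : Bq l) : r • b = Δmap l r * b := by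
  rw [Algebra.smul_def, algebraMap_AB]

lemma mem_xmB {l m : ℕ} {b : Bq l} : b ∈ xmB l m ↔ ∃ b', xB l ^ m * b' = b := by
  simp [xmB, LinearMap.mem_range, LinearMap.mulLeft_apply]

lemma Δ_mem_xmB {l m : ℕ} {c : Aq l} (hc : c ∈ Iid l ^ m) : Δmap l c ∈ xmB l m := by
  have h1 : Ideal.map (Δmap l) (Iid l) ≤ Ideal.span {xB l} := by
    rw [Iid, Ideal.map_span, Ideal.span_le]
    rintro b hb
    simp only [Set.image_insert_eq, Set.image_singleton, Set.mem_insert_iff,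
      Set.mem_singleton_iff] at hb
    rcases hb with rfl | rfl
    · rw [Δmap_xA]; exact Ideal.subset_span rfl
    · rw [Δmap_yA]; exact Ideal.mem_span_singleton'.mpr ⟨tB l, rfl⟩
  have h2 : Ideal.map (Δmap l) (Iid l ^ m) ≤ Ideal.span {xB l ^ m} := by
    rw [Ideal.map_pow, ← Ideal.span_singleton_pow]
    exact Ideal.pow_right_mono h1 m
  have h3 : Δmap l c ∈ Ideal.span {xB l ^ m} := h2 (Ideal.mem_map_of_mem _ hc)
  obtain ⟨b', hb'⟩ := Ideal.mem_span_singleton'.mp h3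
  exact mem_xmB.mpr ⟨b', by rw [mul_comm]; exact hb'⟩

/-- The map `c ↦ (Δ(c), −c)` as a linear map `I^m → (x^m B) × I^a`. -/
def νmap (l a m : ℕ) (ham : a ≤ m) :
    ↥(Iid l ^ m) →ₗ[Aq l] (↥(xmB l m) × ↥(Iid l ^ a)) where
  toFun c := (⟨Δmap l c, Δ_mem_xmB c.2⟩,
    ⟨-(c : Aq l), neg_mem (Ideal.pow_le_pow_right ham c.2)⟩)
  map_add' c d := by
    refine Prod.ext (Subtype.ext ?_) (Subtype.ext ?_)
    · show Δmap l ((c : Aq l) + d) = Δmap l c + Δmap l d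
      rw [map_add]
    · show -((c : Aq l) + d) = -(c : Aq l) + -(d : Aq l)
      rw [neg_add]
  map_smul' r c := by
    refine Prod.ext (Subtype.ext ?_) (Subtype.ext ?_)
    · show Δmap l (r • (c : Aq l)) = r • Δmap l (c : Aq l)
      rw [smul_eq_mul, map_mul, smul_B]
    · show -(r * (c : Aq l)) = r * (-(c : Aq l))
      ring

lemma Nsub_eq (l a m : ℕ) (ham : a ≤ m) :
    Nsub l a m = LinearMap.range (νmap l a m ham) := by
  refine le_antisymm (Submodule.span_le.mpr ?_) ?_
  · rintro p ⟨c, hc, h1, h2⟩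
    refine ⟨⟨c, hc⟩, ?_⟩
    refine Prod.ext (Subtype.ext ?_) (Subtype.ext ?_)
    · exact h1.symm
    · exact h2.symm
  · rintro p ⟨c, rfl⟩
    exact Submodule.subset_span ⟨(c : Aq l), c.2, rfl, rfl⟩

lemma mem_Nsub {l a m : ℕ} (ham : a ≤ m) {p : ↥(xmB l m) × ↥(Iid l ^ a)} :
    p ∈ Nsub l a m ↔ ∃ c ∈ Iid l ^ m, (p.1 : Bq l) = Δmap l c ∧ (p.2 : Aq l) = -c := by
  rw [Nsub_eq l a m ham]
  constructor
  · rintro ⟨c, rfl⟩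
    exact ⟨(c : Aq l), c.2, rfl, rfl⟩
  · rintro ⟨c, hc, h1, h2⟩
    exact ⟨⟨c, hc⟩, Prod.ext (Subtype.ext h1.symm) (Subtype.ext h2.symm)⟩

section main
variable (l n m : ℕ)

/-- Inclusion `I^{n+1} ⊆ I^n` as a linear map. -/
def inclmap : ↥(Iid l ^ (n + 1)) →ₗ[Aq l] ↥(Iid l ^ n) :=
  Submodule.inclusion (Ideal.pow_le_pow_right (Nat.le_succ n))

/-- The product map `(x^m B) × I^{n+1} → (x^m B) × I^n`. -/
def premap : (↥(xmB l m) × ↥(Iid l ^ (n + 1))) →ₗ[Aq l] (↥(xmB l m) × ↥(Iid l ^ n)) :=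
  (LinearMap.id).prodMap (inclmap l n)

def gmap : (↥(xmB l m) × ↥(Iid l ^ (n + 1))) →ₗ[Aq l] τmod l n m :=
  (Nsub l n m).mkQ ∘ₗ premap l n m

variable {n m}

lemma Nsub_le_ker_gmap (hnm : n < m) : Nsub l (n + 1) m ≤ LinearMap.ker (gmap l n m) := by
  rw [Nsub_eq l (n + 1) m hnm]
  rintro p ⟨c, rfl⟩
  rw [LinearMap.mem_ker, gmap, LinearMap.comp_apply, Submodule.mkQ_apply,
    Submodule.Quotient.mk_eq_zero]
  refine (mem_Nsub (le_of_lt hnm)).mpr ⟨(c : Aq l), c.2, rfl, rfl⟩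

/-- The induced map `τ_{n+1,m} → τ_{n,m}`. -/
def fmap (hnm : n < m) : τmod l (n + 1) m →ₗ[Aq l] τmod l n m :=
  Submodule.liftQ _ (gmap l n m) (Nsub_le_ker_gmap l hnm)

lemma fmap_mk (hnm : n < m) (p : ↥(xmB l m) × ↥(Iid l ^ (n + 1))) :
    fmap l hnm (Submodule.Quotient.mk p) =
      Submodule.Quotient.mk
        (p.1, Submodule.inclusion (Ideal.pow_le_pow_right (Nat.le_succ n)) p.2) := rfl

lemma fmap_injective (hnm : n < m) : Function.Injective (fmap l hnm) := by
  rw [← LinearMap.ker_eq_bot]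
  refine Submodule.ker_liftQ_eq_bot _ _ _ ?_
  intro p hp
  rw [LinearMap.mem_ker, gmap, LinearMap.comp_apply, Submodule.mkQ_apply,
    Submodule.Quotient.mk_eq_zero] at hp
  obtain ⟨c, hc, h1, h2⟩ := (mem_Nsub (le_of_lt hnm)).mp hp
  exact (mem_Nsub hnm).mpr ⟨c, hc, h1, h2⟩

end main

section coker
variable (l : ℕ) {n m : ℕ}

def Tsub (l n m : ℕ) : Submodule (Aq l) (↥(xmB l m) × ↥(Iid l ^ n)) :=
  LinearMap.range (premap l n m)

lemma range_fmap (hnm : n < m) :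
    LinearMap.range (fmap l hnm) = (Tsub l n m).map (Nsub l n m).mkQ := by
  rw [fmap, Submodule.range_liftQ, gmap, LinearMap.range_comp, Tsub]

lemma Nsub_le_Tsub (hnm : n < m) : Nsub l n m ≤ Tsub l n m := by
  intro p hp
  obtain ⟨c, hc, h1, h2⟩ := (mem_Nsub hnm.le).mp hp
  refine ⟨(p.1, ⟨-c, neg_mem (Ideal.pow_le_pow_right hnm hc)⟩), ?_⟩
  refine Prod.ext rfl (Subtype.ext ?_)
  exact h2.symm

def Ksub (l n : ℕ) : Submodule (Aq l) ↥(Iid l ^ n) :=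
  Submodule.comap (Iid l ^ n).subtype (Iid l ^ (n + 1))

lemma Tsub_eq (l n m : ℕ) :
    Tsub l n m = (⊤ : Submodule (Aq l) ↥(xmB l m)).prod (Ksub l n) := by
  ext p
  rw [Submodule.mem_prod]
  constructor
  · rintro ⟨q, rfl⟩
    exact ⟨trivial, q.2.2⟩
  · rintro ⟨-, h2⟩
    exact ⟨(p.1, ⟨(p.2 : Aq l), h2⟩), Prod.ext rfl (Subtype.ext rfl)⟩

def φ2 (l n m : ℕ) : (↥(xmB l m) × ↥(Iid l ^ n)) →ₗ[Aq l] (↥(Iid l ^ n) ⧸ Ksub l n) :=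
  (Ksub l n).mkQ ∘ₗ LinearMap.snd (Aq l) ↥(xmB l m) ↥(Iid l ^ n)

lemma ker_φ2 (l n m : ℕ) : LinearMap.ker (φ2 l n m) = Tsub l n m := by
  ext p
  rw [Tsub_eq, Submodule.mem_prod]
  simp [φ2, Submodule.Quotient.mk_eq_zero]

lemma φ2_surjective (l n m : ℕ) : Function.Surjective (φ2 l n m) := by
  intro w
  obtain ⟨c, rfl⟩ := Submodule.mkQ_surjective _ w
  exact ⟨(0, c), rfl⟩

def cokerEquiv (hnm : n < m) :
    (τmod l n m ⧸ LinearMap.range (fmap l hnm)) ≃ₗ[Aq l] (↥(Iid l ^ n) ⧸ Ksub l n) :=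
  (Submodule.quotEquivOfEq _ _ (range_fmap l hnm)) ≪≫ₗ
    (Submodule.quotientQuotientEquivQuotient (Nsub l n m) (Tsub l n m) (Nsub_le_Tsub l hnm)) ≪≫ₗ
    (Submodule.quotEquivOfEq _ _ (ker_φ2 l n m).symm) ≪≫ₗ
    ((φ2 l n m).quotKerEquivOfSurjective (φ2_surjective l n m))

lemma smul_coker_zero {r : Aq l} (hr : r ∈ Iid l) (w : ↥(Iid l ^ n) ⧸ Ksub l n) :
    r • w = 0 := by
  obtain ⟨c, rfl⟩ := Submodule.mkQ_surjective _ w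
  rw [Submodule.mkQ_apply, ← Submodule.Quotient.mk_smul, Submodule.Quotient.mk_eq_zero]
  show r • (c : Aq l) ∈ Iid l ^ (n + 1)
  rw [smul_eq_mul, Ideal.IsTwoSided.pow_succ]
  exact Ideal.mul_mem_mul hr c.2

end coker


section free
variable (l n : ℕ)

def μmap (hnl : n < l) : ↥(Iid l ^ n) →ₗ[ℤ] (Fin (n + 1) → ℤ) :=
  (ψmap l n hnl) ∘ₗ ((Iid l ^ n).subtype.restrictScalars ℤ)

lemma μmap_apply (hnl : n < l) (c : ↥(Iid l ^ n)) : μmap l n hnl c = ψmap l n hnl (c : Aq l) := rfl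

lemma dmon_injective {i j : ℕ} (h : dmon n i = dmon n j) : i = j := by
  have := congrArg (fun d => d 1) h
  simpa [dmon_apply1] using this

lemma Ksub_le_ker_μmap (hnl : n < l) :
    (Ksub l n).restrictScalars ℤ ≤ LinearMap.ker (μmap l n hnl) := by
  intro c hc
  rw [LinearMap.mem_ker, μmap_apply]
  exact ψ_vanish l n hnl hc

lemma ker_μmap_le_Ksub (hnl : n < l) :
    LinearMap.ker (μmap l n hnl) ≤ (Ksub l n).restrictScalars ℤ := by
  intro c hc
  rw [LinearMap.mem_ker, μmap_apply] at hc
  obtain ⟨p, hp, hpc⟩ := mem_Iid_pow.mp c.2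
  have hφ : φmap n p = 0 := by rw [← ψmap_mk l n hnl, hpc, hc]
  have hmem : p ∈ Mdeg (n + 1) := by
    intro d hd
    have h1 := Jid_pow_le_Mdeg n hp d hd
    rcases Nat.lt_or_ge (d 0 + d 1) (n + 1) with h2 | h2
    · exfalso
      have hdn : d 0 + d 1 = n := by omega
      have hd1 : d 1 < n + 1 := by omega
      have : MvPolynomial.coeff d p = 0 := by
        have := congrFun hφ ⟨d 1, hd1⟩
        rw [φmap_apply] at this
        rwa [eq_dmon hdn]
      exact MvPolynomial.mem_support_iff.mp hd this
    · exact h2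
  show (c : Aq l) ∈ Iid l ^ (n + 1)
  exact mem_Iid_pow.mpr ⟨p, Mdeg_le_Jid_pow _ hmem, hpc⟩

def Λmap (hnl : n < l) :
    (↥(Iid l ^ n) ⧸ (Ksub l n).restrictScalars ℤ) →ₗ[ℤ] (Fin (n + 1) → ℤ) :=
  Submodule.liftQ _ (μmap l n hnl) (Ksub_le_ker_μmap l n hnl)

lemma Λmap_injective (hnl : n < l) : Function.Injective (Λmap l n hnl) := by
  rw [← LinearMap.ker_eq_bot]
  exact Submodule.ker_liftQ_eq_bot _ _ _ (ker_μmap_le_Ksub l n hnl)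

lemma Λmap_surjective (hnl : n < l) : Function.Surjective (Λmap l n hnl) := by
  intro v
  set p : Rp := ∑ i : Fin (n + 1), MvPolynomial.monomial (dmon n i.val) (v i) with hp_def
  have hp : p ∈ Jid ^ n := by
    refine Submodule.sum_mem _ fun i _ => monomial_mem_Jid_pow _ _ ?_
    rw [dmon_apply0, dmon_apply1]
    have := i.2
    omega
  have hc : Ideal.Quotient.mk (IA l) p ∈ Iid l ^ n := mem_Iid_pow.mpr ⟨p, hp, rfl⟩
  refine ⟨Submodule.Quotient.mk ⟨_, hc⟩, ?_⟩
  rw [Λmap, Submodule.liftQ_apply, μmap_apply, ψmap_mk]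
  funext j
  rw [φmap_apply, hp_def, MvPolynomial.coeff_sum]
  have key : ∀ i : Fin (n + 1),
      MvPolynomial.coeff (dmon n j.val) (MvPolynomial.monomial (dmon n i.val) (v i) : Rp)
        = if i = j then v i else 0 := by
    intro i
    rw [MvPolynomial.coeff_monomial]
    congr 1
    simp only [eq_iff_iff]
    constructor
    · intro h; exact Fin.ext (dmon_injective n h)
    · intro h; rw [h]
  simp only [key]
  simp
end free


def KsubAddEquiv (l n : ℕ) (hnl : n < l) :
    (↥(Iid l ^ n) ⧸ Ksub l n) ≃+ (Fin (n + 1) → ℤ) :=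
  ((Submodule.Quotient.restrictScalarsEquiv ℤ (Ksub l n)).symm ≪≫ₗ
    LinearEquiv.ofBijective (Λmap l n hnl) ⟨Λmap_injective l n hnl, Λmap_surjective l n hnl⟩).toAddEquiv

end ported

/-- For `0 ≤ n < m ≤ l−1`, the map `τ_{n+1,m} → τ_{n,m}` induced by the inclusion
`I^{n+1} ⊆ I^n` (identity on the `x^m·B` factor) is an injective homomorphism of
`A`-modules; its cokernel is isomorphic to `I^n/I^{n+1}`, and this cokernel is a free
abelian group of rank `n+1` on which the classes of `x` and `y` act by zero. -/
theorem stmt_14 (l : ℕ) (hl : 1 ≤ l) (n m : ℕ) (hnm : n < m) (hm : m ≤ l - 1) :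
    ∃ f : τmod l (n + 1) m →ₗ[Aq l] τmod l n m,
      (∀ p : ↥(xmB l m) × ↥(Iid l ^ (n + 1)),
        f (Submodule.Quotient.mk p) =
          Submodule.Quotient.mk
            (p.1, Submodule.inclusion (Ideal.pow_le_pow_right (Nat.le_succ n)) p.2)) ∧
      Function.Injective f ∧
      Nonempty ((τmod l n m ⧸ LinearMap.range f) ≃ₗ[Aq l]
        (↥(Iid l ^ n) ⧸ Submodule.comap (Iid l ^ n).subtype (Iid l ^ (n + 1)))) ∧
      Nonempty ((τmod l n m ⧸ LinearMap.range f) ≃+ (Fin (n + 1) → ℤ)) ∧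
      ∀ v : τmod l n m ⧸ LinearMap.range f, xA l • v = 0 ∧ yA l • v = 0 := by
  have hnl : n < l := by omega
  refine ⟨fmap l hnm, fun p => fmap_mk l hnm p, fmap_injective l hnm,
    ⟨cokerEquiv l hnm⟩, ⟨(cokerEquiv l hnm).toAddEquiv.trans (KsubAddEquiv l n hnl)⟩, ?_⟩
  have key : ∀ r : Aq l, r ∈ Iid l → ∀ v : τmod l n m ⧸ LinearMap.range (fmap l hnm),
      r • v = 0 := by
    intro r hr v
    apply (cokerEquiv l hnm).injective
    rw [map_smul, map_zero]
    exact smul_coker_zero l hr _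
  intro v
  exact ⟨key _ (Ideal.subset_span (Set.mem_insert _ _)) v,
    key _ (Ideal.subset_span (Set.mem_insert_of_mem _ rfl)) v⟩
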